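/- Let n, R ∈ ℕ and let A be a complex n×n matrix that is diagonalizable, A = S·D·S⁻¹ with D diagonal, and B a complex n×R matrix. Let α₁, …, α_j ∈ ℂ with Re(αᵢ) < 0 and A + αᵢI invertible for each i, define the ADI iterates X₀ := 0, Xᵢ := Cᵢ·Xᵢ₋₁·Cᵢᴴ + Bᵢ·Bᵢᴴ with Cᵢ := (A + αᵢI)⁻¹·(A − conj(αᵢ)I) and Bᵢ := √(−2Re(αᵢ))·(A + αᵢI)⁻¹·B, and let V* solve A·V* + V*·Aᴴ + B·Bᴴ = 0. Then ‖X_j − V*‖₂ ≤ (‖S‖₂·‖S⁻¹‖₂)² · ‖V*‖₂ · Θ_j², where Θ_j := ∏_{i=1}^{j} max over diagonal entries z of D of |z − conj(αᵢ)| / |z + αᵢ|. -/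

import Mathlib

open Matrix
open scoped Matrix.Norms.L2Operator

/-- The spectral norm (`2`-norm) of a complex square matrix: its operator norm as a linear
map between Euclidean (`ℓ²`) spaces. -/
noncomputable def specNormC {n : ℕ} (M : Matrix (Fin n) (Fin n) ℂ) : ℝ :=
  ‖Matrix.toEuclideanCLM (𝕜 := ℂ) M‖

/-- Ordered product of ADI iteration matrices: `adiP C i = C i * ⋯ * C 1`. -/
noncomputable def adiP {n : ℕ} (C : ℕ → Matrix (Fin n) (Fin n) ℂ) :
    ℕ → Matrix (Fin n) (Fin n) ℂ
  | 0 => 1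
  | i + 1 => C (i + 1) * adiP C i

/-- The `ℓ²` operator norm of a diagonal matrix is bounded by any uniform bound
on the absolute values of its entries. -/
lemma specNorm_diagonal_le {n : ℕ} (e : Fin n → ℂ) (c : ℝ) (hc : 0 ≤ c)
    (h : ∀ k, ‖e k‖ ≤ c) : ‖Matrix.diagonal e‖ ≤ c := by
  rw [Matrix.cstar_norm_def]
  refine ContinuousLinearMap.opNorm_le_bound _ hc fun x => ?_
  have hcomp : ∀ k, (Matrix.toEuclideanCLM (𝕜 := ℂ) (Matrix.diagonal e) x) k = e k * x k := by
    intro k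
    exact Matrix.mulVec_diagonal e (fun i => x i) k
  rw [EuclideanSpace.norm_eq, EuclideanSpace.norm_eq]
  have h1 : ∑ k, ‖(Matrix.toEuclideanCLM (𝕜 := ℂ) (Matrix.diagonal e) x) k‖ ^ 2
      ≤ c ^ 2 * ∑ k, ‖x k‖ ^ 2 := by
    rw [Finset.mul_sum]
    refine Finset.sum_le_sum fun k _ => ?_
    rw [hcomp k]
    have : ‖e k * x k‖ = ‖e k‖ * ‖x k‖ := norm_mul _ _
    rw [this, mul_pow]
    have hek : ‖e k‖ ≤ c := h k
    gcongr
  calc Real.sqrt (∑ k, ‖(Matrix.toEuclideanCLM (𝕜 := ℂ) (Matrix.diagonal e) x) k‖ ^ 2)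
      ≤ Real.sqrt (c ^ 2 * ∑ k, ‖x k‖ ^ 2) := Real.sqrt_le_sqrt h1
    _ = c * Real.sqrt (∑ k, ‖x k‖ ^ 2) := by
        rw [Real.sqrt_mul (sq_nonneg c), Real.sqrt_sq hc]

/-- The Lyapunov solution is a fixed point of each ADI iteration step. -/
lemma adi_fixed_point {n R : ℕ} (A Vstar : Matrix (Fin n) (Fin n) ℂ)
    (B : Matrix (Fin n) (Fin R) ℂ) (a : ℂ) (ha : a.re < 0)
    (hM : IsUnit (A + a • (1 : Matrix (Fin n) (Fin n) ℂ)))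
    (hVstar : A * Vstar + Vstar * Aᴴ + B * Bᴴ = 0) :
    ((A + a • 1)⁻¹ * (A - (starRingEnd ℂ a) • 1)) * Vstar *
      ((A + a • 1)⁻¹ * (A - (starRingEnd ℂ a) • 1))ᴴ
    + ((Real.sqrt (-2 * a.re) : ℂ) • ((A + a • 1)⁻¹ * B)) *
      ((Real.sqrt (-2 * a.re) : ℂ) • ((A + a • 1)⁻¹ * B))ᴴ = Vstar := by
  have h2 : A * Vstar = -(Vstar * Aᴴ) - B * Bᴴ := by
    linear_combination (norm := abel) hVstar
  have ht0 : (0:ℝ) ≤ -2 * a.re := by linarith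
  have hMH : (A + a • (1 : Matrix (Fin n) (Fin n) ℂ))ᴴ = Aᴴ + (starRingEnd ℂ a) • 1 := by
    simp [conjTranspose_add, conjTranspose_smul]
  have hNH : (A - (starRingEnd ℂ a) • (1 : Matrix (Fin n) (Fin n) ℂ))ᴴ = Aᴴ - a • 1 := by
    simp [conjTranspose_sub, conjTranspose_smul]
  have hconj : (starRingEnd ℂ) a + a = -(((-2 : ℝ) * a.re : ℝ) : ℂ) := by
    rw [add_comm, Complex.add_conj]
    push_cast
    ring
  have key : (A + a • 1) * Vstar * (Aᴴ + (starRingEnd ℂ a) • 1)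
      = (A - (starRingEnd ℂ a) • 1) * Vstar * (Aᴴ - a • 1)
        + (((-2 : ℝ) * a.re : ℝ) : ℂ) • (B * Bᴴ) := by
    simp only [Matrix.add_mul, Matrix.mul_add, Matrix.sub_mul, Matrix.mul_sub,
      smul_mul_assoc, mul_smul_comm, Matrix.one_mul, Matrix.mul_one, smul_smul]
    rw [h2]
    match_scalars <;> (apply Complex.ext <;> simp <;> ring)
  set M : Matrix (Fin n) (Fin n) ℂ := A + a • 1 with hMdef
  set N : Matrix (Fin n) (Fin n) ℂ := A - (starRingEnd ℂ a) • 1 with hNdef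
  have hMdet : IsUnit M.det := (Matrix.isUnit_iff_isUnit_det M).mp hM
  have hMHdet : IsUnit Mᴴ.det := by
    rw [Matrix.det_conjTranspose]
    exact hMdet.star
  have hBm : ((Real.sqrt (-2 * a.re) : ℂ) • (M⁻¹ * B)) *
      ((Real.sqrt (-2 * a.re) : ℂ) • (M⁻¹ * B))ᴴ
      = (((-2 : ℝ) * a.re : ℝ) : ℂ) • (M⁻¹ * (B * Bᴴ) * (Mᴴ)⁻¹) := by
    rw [conjTranspose_smul, Matrix.conjTranspose_mul, Matrix.conjTranspose_nonsing_inv]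
    simp only [Matrix.smul_mul, Matrix.mul_smul, smul_smul]
    rw [Complex.star_def, Complex.conj_ofReal, ← Complex.ofReal_mul,
      Real.mul_self_sqrt ht0]
    congr 1
    simp [Matrix.mul_assoc]
  have hCV : (M⁻¹ * N) * Vstar * (M⁻¹ * N)ᴴ = M⁻¹ * (N * Vstar * Nᴴ) * (Mᴴ)⁻¹ := by
    rw [Matrix.conjTranspose_mul, Matrix.conjTranspose_nonsing_inv]
    noncomm_ring
  rw [hBm, hCV]
  have : M⁻¹ * (N * Vstar * Nᴴ) * (Mᴴ)⁻¹ + (((-2 : ℝ) * a.re : ℝ) : ℂ) • (M⁻¹ * (B * Bᴴ) * (Mᴴ)⁻¹)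
      = M⁻¹ * (N * Vstar * Nᴴ + (((-2 : ℝ) * a.re : ℝ) : ℂ) • (B * Bᴴ)) * (Mᴴ)⁻¹ := by
    simp only [Matrix.mul_add, Matrix.add_mul, mul_smul_comm, smul_mul_assoc]
  rw [this, hNH, ← key, ← hMH]
  calc M⁻¹ * (M * Vstar * Mᴴ) * (Mᴴ)⁻¹ = (M⁻¹ * M) * Vstar * (Mᴴ * (Mᴴ)⁻¹) := by noncomm_ring
    _ = Vstar := by rw [Matrix.nonsing_inv_mul M hMdet, Matrix.mul_nonsing_inv Mᴴ hMHdet,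
        Matrix.one_mul, Matrix.mul_one]

/-- General ADI error bound: for diagonalizable `A = S D S⁻¹` (`D` diagonal),
shifts `αᵢ` with `Re αᵢ < 0` and `A + αᵢ I` invertible, the ADI iterates `X₀ = 0`,
`Xᵢ = Cᵢ Xᵢ₋₁ Cᵢᴴ + Bᵢ Bᵢᴴ` and the Lyapunov solution `V*` satisfy
`‖X_j − V*‖₂ ≤ (‖S‖₂ ‖S⁻¹‖₂)² ‖V*‖₂ Θ_j²` with
`Θ_j = ∏ᵢ max_z |z − conj αᵢ| / |z + αᵢ|` over the diagonal entries `z` of `D`. -/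
theorem adi_error_bound_diagonalizable (n R j : ℕ)
    (A S D : Matrix (Fin n) (Fin n) ℂ)
    (hS : IsUnit S) (hD : D.IsDiag) (hAS : A = S * D * S⁻¹)
    (B : Matrix (Fin n) (Fin R) ℂ)
    (α : ℕ → ℂ)
    (hα : ∀ i, 1 ≤ i → i ≤ j → (α i).re < 0)
    (hinv : ∀ i, 1 ≤ i → i ≤ j → IsUnit (A + α i • (1 : Matrix (Fin n) (Fin n) ℂ)))
    (C : ℕ → Matrix (Fin n) (Fin n) ℂ)
    (hC : ∀ i, C i = (A + α i • 1)⁻¹ * (A - (starRingEnd ℂ (α i)) • 1))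
    (Bm : ℕ → Matrix (Fin n) (Fin R) ℂ)
    (hBm : ∀ i, Bm i = (Real.sqrt (-2 * (α i).re) : ℂ) • ((A + α i • 1)⁻¹ * B))
    (X : ℕ → Matrix (Fin n) (Fin n) ℂ)
    (hX0 : X 0 = 0)
    (hX : ∀ i, 1 ≤ i → i ≤ j → X i = C i * X (i - 1) * (C i)ᴴ + Bm i * (Bm i)ᴴ)
    (Vstar : Matrix (Fin n) (Fin n) ℂ)
    (hVstar : A * Vstar + Vstar * Aᴴ + B * Bᴴ = 0)
    (Θ : ℝ)
    (hΘ : Θ = ∏ i ∈ Finset.Icc 1 j,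
      ⨆ k : Fin n, ‖D k k - starRingEnd ℂ (α i)‖ / ‖D k k + α i‖) :
    specNormC (X j - Vstar) ≤ (specNormC S * specNormC S⁻¹) ^ 2 * specNormC Vstar * Θ ^ 2 := by
  have hs : ∀ M : Matrix (Fin n) (Fin n) ℂ, specNormC M = ‖M‖ := fun _ => rfl
  rw [hs, hs, hs, hs]
  have hSdet : IsUnit S.det := (Matrix.isUnit_iff_isUnit_det S).mp hS
  have hS1 : S * S⁻¹ = 1 := Matrix.mul_nonsing_inv S hSdet
  have hS2 : S⁻¹ * S = 1 := Matrix.nonsing_inv_mul S hSdet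
  have cancel : ∀ P Q : Matrix (Fin n) (Fin n) ℂ,
      (S * P * S⁻¹) * (S * Q * S⁻¹) = S * (P * Q) * S⁻¹ := by
    intro P Q
    simp only [Matrix.mul_assoc]
    rw [← Matrix.mul_assoc S⁻¹ S, hS2, Matrix.one_mul]
  -- the diagonal counterparts
  set E : ℕ → Matrix (Fin n) (Fin n) ℂ :=
    fun i => (D + α i • 1)⁻¹ * (D - (starRingEnd ℂ (α i)) • 1) with hEdef
  set Θi : ℕ → ℝ := fun i =>
    ⨆ k : Fin n, ‖D k k - starRingEnd ℂ (α i)‖ / ‖D k k + α i‖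
    with hΘidef
  have hsimadd : ∀ c : ℂ, A + c • 1 = S * (D + c • 1) * S⁻¹ := by
    intro c
    rw [hAS, Matrix.mul_add, Matrix.add_mul, Matrix.mul_smul, Matrix.smul_mul,
      Matrix.mul_one, hS1]
  have hsimsub : ∀ c : ℂ, A - c • 1 = S * (D - c • 1) * S⁻¹ := by
    intro c
    rw [hAS, Matrix.mul_sub, Matrix.sub_mul, Matrix.mul_smul, Matrix.smul_mul,
      Matrix.mul_one, hS1]
  have hCE : ∀ i, C i = S * E i * S⁻¹ := by
    intro i
    have hinvsim : (A + α i • 1)⁻¹ = S * (D + α i • 1)⁻¹ * S⁻¹ := by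
      rw [hsimadd (α i), Matrix.mul_inv_rev, Matrix.mul_inv_rev,
        Matrix.nonsing_inv_nonsing_inv S hSdet, Matrix.mul_assoc]
    rw [hC i, hinvsim, hsimsub (starRingEnd ℂ (α i)), cancel]
  have hDd : Matrix.diagonal D.diag = D := hD.diagonal_diag
  have hDadd : ∀ c : ℂ, D + c • 1 = Matrix.diagonal (fun k => D k k + c) := by
    intro c
    nth_rewrite 1 [← hDd]
    rw [Matrix.smul_one_eq_diagonal, Matrix.diagonal_add]
    rfl
  have hDsub : ∀ c : ℂ, D - c • 1 = Matrix.diagonal (fun k => D k k - c) := by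
    intro c
    nth_rewrite 1 [← hDd]
    rw [Matrix.smul_one_eq_diagonal, Matrix.diagonal_sub]
    rfl
  have hEdiag : ∀ i, 1 ≤ i → i ≤ j → E i
      = Matrix.diagonal (fun k => (D k k + α i)⁻¹ * (D k k - starRingEnd ℂ (α i))) := by
    intro i h1 h2
    have hdet : IsUnit (D + α i • (1 : Matrix (Fin n) (Fin n) ℂ)).det := by
      have h := (Matrix.isUnit_iff_isUnit_det _).mp (hinv i h1 h2)
      rw [hsimadd (α i), Matrix.det_mul, Matrix.det_mul] at h
      have h0 := isUnit_iff_ne_zero.mp h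
      refine isUnit_iff_ne_zero.mpr fun hz => h0 ?_
      rw [hz]
      ring
    have hw : ∀ k, D k k + α i ≠ 0 := by
      intro k
      have hprod : (D + α i • (1 : Matrix (Fin n) (Fin n) ℂ)).det
          = ∏ l, (D l l + α i) := by
        rw [hDadd (α i), Matrix.det_diagonal]
      rw [hprod] at hdet
      have hne := isUnit_iff_ne_zero.mp hdet
      exact Finset.prod_ne_zero_iff.mp hne k (Finset.mem_univ k)
    have hmul : (D + α i • 1) *
        Matrix.diagonal (fun k => (D k k + α i)⁻¹ * (D k k - starRingEnd ℂ (α i)))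
        = D - starRingEnd ℂ (α i) • 1 := by
      rw [hDadd (α i), hDsub (starRingEnd ℂ (α i)), Matrix.diagonal_mul_diagonal]
      refine congrArg Matrix.diagonal (funext fun k => ?_)
      rw [← mul_assoc, mul_inv_cancel₀ (hw k), one_mul]
    calc E i = (D + α i • 1)⁻¹ * (D - starRingEnd ℂ (α i) • 1) := rfl
      _ = (D + α i • 1)⁻¹ * ((D + α i • 1) *
            Matrix.diagonal (fun k => (D k k + α i)⁻¹ * (D k k - starRingEnd ℂ (α i)))) := by
          rw [hmul]
      _ = Matrix.diagonal (fun k => (D k k + α i)⁻¹ * (D k k - starRingEnd ℂ (α i))) := by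
          rw [← Matrix.mul_assoc, Matrix.nonsing_inv_mul _ hdet, Matrix.one_mul]
  have hΘi_nonneg : ∀ i, 0 ≤ Θi i := by
    intro i
    exact Real.iSup_nonneg fun k => div_nonneg (norm_nonneg _) (norm_nonneg _)
  have hEnorm : ∀ i, 1 ≤ i → i ≤ j → ‖E i‖ ≤ Θi i := by
    intro i h1 h2
    rw [hEdiag i h1 h2]
    refine specNorm_diagonal_le _ _ (hΘi_nonneg i) fun k => ?_
    have habs : ‖(D k k + α i)⁻¹ * (D k k - starRingEnd ℂ (α i))‖
        = ‖D k k - starRingEnd ℂ (α i)‖ / ‖D k k + α i‖ := by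
      rw [norm_mul, norm_inv]
      ring
    rw [habs]
    exact le_ciSup (f := fun k : Fin n =>
      ‖D k k - starRingEnd ℂ (α i)‖ / ‖D k k + α i‖)
      (Set.Finite.bddAbove (Set.finite_range _)) k
  -- fixed point of each step
  have hfix : ∀ i, 1 ≤ i → i ≤ j →
      C i * Vstar * (C i)ᴴ + Bm i * (Bm i)ᴴ = Vstar := by
    intro i h1 h2
    rw [hC i, hBm i]
    exact adi_fixed_point A Vstar B (α i) (hα i h1 h2) (hinv i h1 h2) hVstar
  -- error recursion
  have herr : ∀ i, i ≤ j → X i - Vstar = adiP C i * (-Vstar) * (adiP C i)ᴴ := by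
    intro i
    induction i with
    | zero =>
        intro _
        simp [hX0, adiP]
    | succ i ih =>
        intro hij
        have hi : i ≤ j := Nat.le_of_succ_le hij
        have hXs := hX (i + 1) (Nat.le_add_left 1 i) hij
        simp only [Nat.add_sub_cancel] at hXs
        have hfp := hfix (i + 1) (Nat.le_add_left 1 i) hij
        have hstep : C (i+1) * (X i - Vstar) * (C (i+1))ᴴ = X (i+1) - Vstar := by
          calc C (i+1) * (X i - Vstar) * (C (i+1))ᴴ
              = (C (i+1) * X i * (C (i+1))ᴴ + Bm (i+1) * (Bm (i+1))ᴴ)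
                - (C (i+1) * Vstar * (C (i+1))ᴴ + Bm (i+1) * (Bm (i+1))ᴴ) := by
                rw [Matrix.mul_sub, Matrix.sub_mul]
                abel
            _ = X (i+1) - Vstar := by rw [hfp, ← hXs]
        rw [← hstep, ih hi]
        simp [adiP, Matrix.conjTranspose_mul, Matrix.mul_assoc]
  -- similarity of the products
  have hsimP : ∀ i, adiP C i = S * adiP E i * S⁻¹ := by
    intro i
    induction i with
    | zero => rw [adiP, adiP, Matrix.mul_one, hS1]
    | succ i ih => rw [adiP, adiP, ih, hCE (i+1), cancel]
  -- norm bound on the diagonal product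
  have hnormP : ∀ i, i ≤ j → ‖adiP E i‖ ≤ ∏ l ∈ Finset.Icc 1 i, Θi l := by
    intro i
    induction i with
    | zero =>
        intro _
        rw [show (Finset.Icc 1 0 : Finset ℕ) = ∅ from rfl, Finset.prod_empty, adiP,
          Matrix.cstar_norm_def, _root_.map_one, ContinuousLinearMap.one_def]
        exact ContinuousLinearMap.norm_id_le
    | succ i ih =>
        intro hij
        have hi : i ≤ j := Nat.le_of_succ_le hij
        rw [adiP, Finset.prod_Icc_succ_top (Nat.le_add_left 1 i),
          mul_comm (∏ l ∈ Finset.Icc 1 i, Θi l)]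
        calc ‖E (i+1) * adiP E i‖ ≤ ‖E (i+1)‖ * ‖adiP E i‖ := Matrix.l2_opNorm_mul _ _
          _ ≤ Θi (i+1) * ∏ l ∈ Finset.Icc 1 i, Θi l := by
              have h1 := hEnorm (i+1) (Nat.le_add_left 1 i) hij
              have hn : (0:ℝ) ≤ ‖adiP E i‖ := norm_nonneg _
              exact mul_le_mul h1 (ih hi) hn (hΘi_nonneg (i+1))
  -- assemble
  have hΘprod : Θ = ∏ l ∈ Finset.Icc 1 j, Θi l := hΘ
  have hΘ0 : 0 ≤ Θ := by
    rw [hΘprod]; exact Finset.prod_nonneg fun l _ => hΘi_nonneg l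
  have hF : ‖adiP E j‖ ≤ Θ := by rw [hΘprod]; exact hnormP j le_rfl
  set F : Matrix (Fin n) (Fin n) ℂ := adiP E j with hFdef
  have hP : ‖S * F * S⁻¹‖ ≤ ‖S‖ * ‖S⁻¹‖ * Θ := by
    calc ‖S * F * S⁻¹‖ ≤ ‖S * F‖ * ‖S⁻¹‖ := Matrix.l2_opNorm_mul _ _
      _ ≤ ‖S‖ * ‖F‖ * ‖S⁻¹‖ := by
          have := Matrix.l2_opNorm_mul S F
          gcongr
      _ ≤ ‖S‖ * Θ * ‖S⁻¹‖ := by gcongr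
      _ = ‖S‖ * ‖S⁻¹‖ * Θ := by ring
  have hXj : X j - Vstar = (S * F * S⁻¹) * (-Vstar) * (S * F * S⁻¹)ᴴ := by
    rw [herr j le_rfl, hsimP j]
  have main : ‖X j - Vstar‖ ≤ (‖S‖ * ‖S⁻¹‖ * Θ) * ‖Vstar‖ * (‖S‖ * ‖S⁻¹‖ * Θ) := by
    rw [hXj]
    calc ‖(S * F * S⁻¹) * (-Vstar) * (S * F * S⁻¹)ᴴ‖
        ≤ ‖(S * F * S⁻¹) * (-Vstar)‖ * ‖(S * F * S⁻¹)ᴴ‖ := Matrix.l2_opNorm_mul _ _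
      _ ≤ (‖S * F * S⁻¹‖ * ‖Vstar‖) * ‖S * F * S⁻¹‖ := by
          rw [Matrix.l2_opNorm_conjTranspose]
          have h1 : ‖(S * F * S⁻¹) * (-Vstar)‖ ≤ ‖S * F * S⁻¹‖ * ‖Vstar‖ := by
            have := Matrix.l2_opNorm_mul (S * F * S⁻¹) (-Vstar)
            rwa [norm_neg] at this
          exact mul_le_mul_of_nonneg_right h1 (norm_nonneg _)
      _ ≤ ((‖S‖ * ‖S⁻¹‖ * Θ) * ‖Vstar‖) * (‖S‖ * ‖S⁻¹‖ * Θ) := by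
          have h0 : (0:ℝ) ≤ ‖S‖ * ‖S⁻¹‖ * Θ :=
            mul_nonneg (mul_nonneg (norm_nonneg _) (norm_nonneg _)) hΘ0
          gcongr
  calc ‖X j - Vstar‖ ≤ (‖S‖ * ‖S⁻¹‖ * Θ) * ‖Vstar‖ * (‖S‖ * ‖S⁻¹‖ * Θ) := main
    _ = (‖S‖ * ‖S⁻¹‖) ^ 2 * ‖Vstar‖ * Θ ^ 2 := by ring
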